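/- Conjugation of Jordan–Wigner Majorana operators by the cyclic shift of qubits: let S be the unitary operator on H_N (N ≥ 2) determined by S(v_1 ⊗ v_2 ⊗ ⋯ ⊗ v_N) = v_N ⊗ v_1 ⊗ ⋯ ⊗ v_{N−1}. Then S γ_k S† = Z_1 γ_{k+2} for all 1 ≤ k ≤ 2N−2, while the last two Majorana operators acquire the total parity operator: S γ_{2N−1} S† = −Z_1 γ_1 P and S γ_{2N} S† = −Z_1 γ_2 P. -/

import Mathlib

open Complex Matrix

noncomputable section

/-- Computational basis labels for `L` qubits: bit strings `b : Fin L → Fin 2`. -/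
abbrev QBasis (L : ℕ) := Fin L → Fin 2

/-- State vectors of `L` qubits (the Hilbert space `H_L = (ℂ²)^{⊗L}`
in its computational basis coordinates). -/
abbrev QVec (L : ℕ) := QBasis L → ℂ

/-- Operators on `L` qubits, written as matrices in the computational basis. -/
abbrev QOp (L : ℕ) := Matrix (QBasis L) (QBasis L) ℂ

/-- The inner product `⟨φ, ψ⟩`, conjugate-linear in the first argument. -/
def qInner {L : ℕ} (φ ψ : QVec L) : ℂ := ∑ b, (starRingEnd ℂ) (φ b) * ψ b

/-- `+1` for bit `0`, `-1` for bit `1`. -/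
def bitSign (x : Fin 2) : ℂ := if x = 0 then 1 else -1

/-- Flip the `k`-th bit of a bit string. -/
def flipBit {L : ℕ} (k : Fin L) (b : QBasis L) : QBasis L :=
  Function.update b k (1 - b k)

/-- Pauli `X` on the (1-based) site `k`; the identity if `k` is out of range. -/
def siteX (L : ℕ) (k : ℕ) : QOp L :=
  if h : 1 ≤ k ∧ k ≤ L then
    Matrix.of fun b c => if c = flipBit ⟨k - 1, by omega⟩ b then 1 else 0
  else 1

/-- Pauli `Y` on the (1-based) site `k`; the identity if `k` is out of range. -/
def siteY (L : ℕ) (k : ℕ) : QOp L :=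
  if h : 1 ≤ k ∧ k ≤ L then
    Matrix.of fun b c =>
      if c = flipBit ⟨k - 1, by omega⟩ b then -Complex.I * bitSign (b ⟨k - 1, by omega⟩)
      else 0
  else 1

/-- Pauli `Z` on the (1-based) site `k`; the identity if `k` is out of range. -/
def siteZ (L : ℕ) (k : ℕ) : QOp L :=
  if h : 1 ≤ k ∧ k ≤ L then
    Matrix.diagonal fun b => bitSign (b ⟨k - 1, by omega⟩)
  else 1

/-- The ordered operator product `f 1 * f 2 * ⋯ * f n`. -/
def opProd (L : ℕ) (f : ℕ → QOp L) (n : ℕ) : QOp L :=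
  ((List.range n).map fun i => f (i + 1)).prod

/-- The Jordan–Wigner Majorana operator `γ_m` (1-based, `1 ≤ m ≤ 2L`):
`γ_{2k-1} = Z_1 ⋯ Z_{k-1} X_k` and `γ_{2k} = Z_1 ⋯ Z_{k-1} Y_k`. -/
def majorana (L : ℕ) (m : ℕ) : QOp L :=
  opProd L (siteZ L) ((m + 1) / 2 - 1) *
    (if m % 2 = 1 then siteX L ((m + 1) / 2) else siteY L ((m + 1) / 2))

/-- The total parity operator `P = Z_1 Z_2 ⋯ Z_L`. -/
def totalParity (L : ℕ) : QOp L := opProd L (siteZ L) L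


/-- The cyclic shift of a bit string: `(cycShift b)_1 = b_N` and
`(cycShift b)_j = b_{j-1}` for `j ≥ 2` (0-based: `j ↦ b (j - 1)` mod `N`). -/
def cycShift {N : ℕ} (b : QBasis N) : QBasis N := fun j => b ((finRotate N).symm j)

-- Auxiliary lemmas


def ush {N : ℕ} (b : QBasis N) : QBasis N := fun j => b (finRotate N j)

lemma cycShift_ush {N : ℕ} (b : QBasis N) : cycShift (ush b) = b := by
  funext j; simp only [cycShift, ush, Equiv.apply_symm_apply]

lemma ush_cycShift {N : ℕ} (b : QBasis N) : ush (cycShift b) = b := by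
  funext j; simp only [cycShift, ush, Equiv.symm_apply_apply]

lemma ush_inj {N : ℕ} : Function.Injective (ush (N := N)) := by
  intro a b h
  rw [← cycShift_ush a, h, cycShift_ush]

lemma bitSign_sq (x : Fin 2) : bitSign x * bitSign x = 1 := by
  fin_cases x <;> simp [bitSign]

lemma bitSign_flip (x : Fin 2) : bitSign (1 - x) = -bitSign x := by
  fin_cases x <;> simp [bitSign]

lemma rho_val {N : ℕ} (hN : 2 ≤ N) (i : Fin N) : ((finRotate N i : Fin N) : ℕ) = ((i : ℕ) + 1) % N := by
  rcases N with _ | m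
  · omega
  · rw [finRotate_succ_apply, Fin.val_add]
    congr 1
    simp [Nat.mod_eq_of_lt (show 1 < m + 1 by omega)]

lemma rho_mk {N : ℕ} (hN : 2 ≤ N) (a b : ℕ) (ha : a < N) (hb : b < N)
    (hab : (a + 1) % N = b) : finRotate N ⟨a, ha⟩ = ⟨b, hb⟩ :=
  Fin.ext (by rw [rho_val hN]; exact hab)

lemma rho_symm_mod {N : ℕ} (hN : 2 ≤ N) (i : Fin N) :
    ((((finRotate N).symm i : Fin N) : ℕ) + 1) % N = (i : ℕ) := by
  conv_rhs => rw [← (finRotate N).apply_symm_apply i]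
  rw [rho_val hN]

lemma flip_ush {N : ℕ} (t : Fin N) (b : QBasis N) :
    flipBit t (ush b) = ush (flipBit (finRotate N t) b) := by
  funext i
  simp [flipBit, ush, Function.update_apply, EmbeddingLike.apply_eq_iff_eq]

def Dfun (N n : ℕ) (b : QBasis N) : ℂ := ∏ i : Fin N, if (i : ℕ) < n then bitSign (b i) else 1

lemma Dfun_zero {N : ℕ} (b : QBasis N) : Dfun N 0 b = 1 := by simp [Dfun]

lemma Dfun_succ (N n : ℕ) (hn : n < N) (b : QBasis N) :
    Dfun N (n + 1) b = Dfun N n b * bitSign (b ⟨n, hn⟩) := by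
  unfold Dfun
  have key : ∀ i : Fin N, (if (i : ℕ) < n + 1 then bitSign (b i) else 1)
      = (if (i : ℕ) < n then bitSign (b i) else 1) * (if i = ⟨n, hn⟩ then bitSign (b i) else 1) := by
    intro i
    by_cases h : i = ⟨n, hn⟩
    · subst h; simp
    · have hv : (i : ℕ) ≠ n := fun hh => h (Fin.ext hh)
      by_cases h2 : (i : ℕ) < n
      · rw [if_pos (by omega), if_pos h2, if_neg h, mul_one]
      · rw [if_neg (by omega), if_neg h2, if_neg h, mul_one]
  rw [Finset.prod_congr rfl (fun i _ => key i), Finset.prod_mul_distrib,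
    Finset.prod_ite_eq', if_pos (Finset.mem_univ _)]

lemma opProd_succ (L : ℕ) (f : ℕ → QOp L) (n : ℕ) :
    opProd L f (n + 1) = opProd L f n * f (n + 1) := by
  simp [opProd, List.range_succ]

lemma opProd_siteZ (N : ℕ) : ∀ n, n ≤ N → opProd N (siteZ N) n = Matrix.diagonal (Dfun N n) := by
  intro n
  induction n with
  | zero =>
    intro _
    rw [show Dfun N 0 = fun _ => (1 : ℂ) from funext fun b => Dfun_zero b, Matrix.diagonal_one]
    rfl
  | succ m ih =>
    intro hm
    rw [opProd_succ, ih (by omega)]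
    unfold siteZ
    rw [dif_pos (⟨by omega, hm⟩ : 1 ≤ m + 1 ∧ m + 1 ≤ N), Matrix.diagonal_mul_diagonal]
    apply congrArg Matrix.diagonal
    funext b
    rw [Dfun_succ N m (by omega) b]
    rfl

lemma totalParity_diag (N : ℕ) : totalParity N = Matrix.diagonal (Dfun N N) :=
  opProd_siteZ N N le_rfl

lemma siteZ_eq (N k : ℕ) (h1 : 1 ≤ k) (h2 : k ≤ N) :
    siteZ N k = Matrix.diagonal (fun b => bitSign (b ⟨k - 1, by omega⟩)) := by
  unfold siteZ
  rw [dif_pos (⟨h1, h2⟩ : 1 ≤ k ∧ k ≤ N)]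

lemma siteX_apply (N k : ℕ) (h1 : 1 ≤ k) (h2 : k ≤ N) (b c : QBasis N) :
    siteX N k b c = if c = flipBit ⟨k - 1, by omega⟩ b then 1 else 0 := by
  unfold siteX
  rw [dif_pos (⟨h1, h2⟩ : 1 ≤ k ∧ k ≤ N)]
  rfl

lemma siteY_apply (N k : ℕ) (h1 : 1 ≤ k) (h2 : k ≤ N) (b c : QBasis N) :
    siteY N k b c
      = if c = flipBit ⟨k - 1, by omega⟩ b then -Complex.I * bitSign (b ⟨k - 1, by omega⟩) else 0 := by
  unfold siteY
  rw [dif_pos (⟨h1, h2⟩ : 1 ≤ k ∧ k ≤ N)]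
  rfl

lemma majorana_odd' (N m : ℕ) (hm : m % 2 = 1) (h : (m + 1) / 2 ≤ N) :
    majorana N m = Matrix.diagonal (Dfun N ((m + 1) / 2 - 1)) * siteX N ((m + 1) / 2) := by
  rw [majorana, if_pos hm, opProd_siteZ N _ (by omega)]

lemma majorana_even' (N m : ℕ) (hm : m % 2 = 0) (h : (m + 1) / 2 ≤ N) :
    majorana N m = Matrix.diagonal (Dfun N ((m + 1) / 2 - 1)) * siteY N ((m + 1) / 2) := by
  rw [majorana, if_neg (by omega), opProd_siteZ N _ (by omega)]

lemma conj_apply {N : ℕ} (S : QOp N)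
    (hSe : ∀ b c : QBasis N, S b c = if b = cycShift c then 1 else 0)
    (M : QOp N) (b c : QBasis N) : (S * M * Sᴴ) b c = M (ush b) (ush c) := by
  have h1 : ∀ x : QBasis N, (b = cycShift x) = (x = ush b) := by
    intro x
    apply propext
    constructor
    · rintro rfl; rw [ush_cycShift]
    · rintro rfl; rw [cycShift_ush]
  have h2 : ∀ y : QBasis N, (c = cycShift y) = (y = ush c) := by
    intro y
    apply propext
    constructor
    · rintro rfl; rw [ush_cycShift]
    · rintro rfl; rw [cycShift_ush]
  simp [Matrix.mul_apply, Matrix.conjTranspose_apply, hSe, h1, h2,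
    apply_ite (starRingEnd ℂ), ite_mul, mul_ite, Finset.sum_ite_eq']

lemma Dfun_ush (N n : ℕ) (b : QBasis N) :
    Dfun N n (ush b)
      = ∏ i : Fin N, if (((finRotate N).symm i : Fin N) : ℕ) < n then bitSign (b i) else 1 := by
  unfold Dfun
  rw [← Equiv.prod_comp (finRotate N)
    (fun i => if (((finRotate N).symm i : Fin N) : ℕ) < n then bitSign (b i) else 1)]
  simp only [ush, Equiv.symm_apply_apply]

lemma Dfun_shift {N : ℕ} (hN : 2 ≤ N) (j : ℕ) (hj : 1 ≤ j) (hjN : j ≤ N - 1) (b : QBasis N) :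
    Dfun N (j - 1) (ush b) = bitSign (b ⟨0, by omega⟩) * Dfun N j b := by
  rw [Dfun_ush]
  unfold Dfun
  have key : ∀ i : Fin N,
      (if (((finRotate N).symm i : Fin N) : ℕ) < j - 1 then bitSign (b i) else 1)
      = (if i = ⟨0, by omega⟩ then bitSign (b i) else 1) * (if (i : ℕ) < j then bitSign (b i) else 1) := by
    intro i
    have hm := rho_symm_mod hN i
    set m := (((finRotate N).symm i : Fin N) : ℕ) with hmdef
    have hmN : m < N := Fin.is_lt _
    rcases (show m + 1 = N ∨ m + 1 < N by omega) with h | h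
    · have hi0 : (i : ℕ) = 0 := by rw [← hm, h, Nat.mod_self]
      have hieq : i = ⟨0, by omega⟩ := Fin.ext hi0
      rw [if_neg (by omega), if_pos hieq, if_pos (by omega), bitSign_sq]
    · have hmi : m + 1 = (i : ℕ) := by rw [← hm, Nat.mod_eq_of_lt h]
      have hine : i ≠ ⟨0, by omega⟩ := by
        intro hh; rw [Fin.ext_iff] at hh; simp at hh; omega
      rw [if_neg hine, one_mul]
      by_cases hlt : (i : ℕ) < j
      · rw [if_pos (by omega), if_pos hlt]
      · rw [if_neg (by omega), if_neg hlt]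
  rw [Finset.prod_congr rfl (fun i _ => key i), Finset.prod_mul_distrib,
    Finset.prod_ite_eq', if_pos (Finset.mem_univ _)]

lemma DfunL1 {N : ℕ} (hN : 2 ≤ N) (b : QBasis N) :
    Dfun N (N - 1) (ush b) = ∏ i : Fin N, if 0 < (i : ℕ) then bitSign (b i) else 1 := by
  rw [Dfun_ush]
  apply Finset.prod_congr rfl
  intro i _
  have hm := rho_symm_mod hN i
  set m := (((finRotate N).symm i : Fin N) : ℕ) with hmdef
  have hmN : m < N := Fin.is_lt _
  rcases (show m + 1 = N ∨ m + 1 < N by omega) with h | h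
  · have hi0 : (i : ℕ) = 0 := by rw [← hm, h, Nat.mod_self]
    rw [if_neg (by omega), if_neg (by omega)]
  · have hmi : m + 1 = (i : ℕ) := by rw [← hm, Nat.mod_eq_of_lt h]
    rw [if_pos (by omega), if_pos (by omega)]

lemma DfunL2 {N : ℕ} (hN : 2 ≤ N) (b : QBasis N) :
    Dfun N N (flipBit ⟨0, by omega⟩ b)
      = -bitSign (b ⟨0, by omega⟩) * ∏ i : Fin N, if 0 < (i : ℕ) then bitSign (b i) else 1 := by
  unfold Dfun
  have key : ∀ i : Fin N,
      (if (i : ℕ) < N then bitSign (flipBit ⟨0, by omega⟩ b i) else 1)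
      = (if i = ⟨0, by omega⟩ then bitSign (1 - b ⟨0, by omega⟩) else 1)
        * (if 0 < (i : ℕ) then bitSign (b i) else 1) := by
    intro i
    rw [if_pos i.is_lt]
    by_cases h : i = ⟨0, by omega⟩
    · subst h
      rw [if_pos rfl, if_neg (by simp), mul_one]
      simp [flipBit]
    · have hv : (i : ℕ) ≠ 0 := by
        intro hh; exact h (Fin.ext hh)
      rw [if_neg h, if_pos (by omega), one_mul]
      congr 1
      simp [flipBit, Function.update_apply, h]
  rw [Finset.prod_congr rfl (fun i _ => key i), Finset.prod_mul_distrib,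
    Finset.prod_ite_eq', if_pos (Finset.mem_univ _), bitSign_flip]

lemma midX {N : ℕ} (hN : 2 ≤ N) (j : ℕ) (h1 : 1 ≤ j) (h2 : j ≤ N - 1) (b c : QBasis N) :
    (Matrix.diagonal (Dfun N (j - 1)) * siteX N j) (ush b) (ush c)
      = (siteZ N 1 * (Matrix.diagonal (Dfun N j) * siteX N (j + 1))) b c := by
  have hjN : j < N := by omega
  rw [Matrix.diagonal_mul, siteZ_eq N 1 le_rfl (by omega), Matrix.diagonal_mul,
    Matrix.diagonal_mul, siteX_apply N j h1 (by omega), siteX_apply N (j + 1) (by omega) (by omega)]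
  simp only [Nat.add_sub_cancel]
  rw [flip_ush, rho_mk hN (j - 1) j (by omega) hjN
    (by rw [show j - 1 + 1 = j from by omega]; exact Nat.mod_eq_of_lt hjN)]
  simp only [ush_inj.eq_iff]
  by_cases hc : c = flipBit ⟨j, hjN⟩ b
  · rw [if_pos hc, mul_one, mul_one]
    exact Dfun_shift hN j h1 h2 b
  · rw [if_neg hc]
    ring

lemma midY {N : ℕ} (hN : 2 ≤ N) (j : ℕ) (h1 : 1 ≤ j) (h2 : j ≤ N - 1) (b c : QBasis N) :
    (Matrix.diagonal (Dfun N (j - 1)) * siteY N j) (ush b) (ush c)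
      = (siteZ N 1 * (Matrix.diagonal (Dfun N j) * siteY N (j + 1))) b c := by
  have hjN : j < N := by omega
  rw [Matrix.diagonal_mul, siteZ_eq N 1 le_rfl (by omega), Matrix.diagonal_mul,
    Matrix.diagonal_mul, siteY_apply N j h1 (by omega), siteY_apply N (j + 1) (by omega) (by omega)]
  simp only [Nat.add_sub_cancel]
  have hrho : finRotate N ⟨j - 1, by omega⟩ = ⟨j, hjN⟩ :=
    rho_mk hN (j - 1) j (by omega) hjN
      (by rw [show j - 1 + 1 = j from by omega]; exact Nat.mod_eq_of_lt hjN)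
  have hub : ush b ⟨j - 1, by omega⟩ = b ⟨j, hjN⟩ := by
    unfold ush; rw [hrho]
  rw [flip_ush, hrho]
  simp only [ush_inj.eq_iff]
  rw [hub]
  by_cases hc : c = flipBit ⟨j, hjN⟩ b
  · rw [if_pos hc, Dfun_shift hN j h1 h2 b]
    ring
  · rw [if_neg hc]
    ring

lemma lastX {N : ℕ} (hN : 2 ≤ N) (b c : QBasis N) :
    (Matrix.diagonal (Dfun N (N - 1)) * siteX N N) (ush b) (ush c)
      = (-(siteZ N 1 * majorana N 1 * totalParity N)) b c := by
  have h0N : 0 < N := by omega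
  rw [Matrix.neg_apply, totalParity_diag, Matrix.mul_diagonal,
    majorana_odd' N 1 rfl (by omega), Matrix.diagonal_mul,
    siteZ_eq N 1 le_rfl (by omega), Matrix.diagonal_mul, Matrix.diagonal_mul,
    siteX_apply N N (by omega) le_rfl, siteX_apply N 1 le_rfl (by omega)]
  rw [flip_ush, rho_mk hN (N - 1) 0 (by omega) h0N
    (by rw [show N - 1 + 1 = N from by omega]; exact Nat.mod_self N)]
  simp only [ush_inj.eq_iff]
  by_cases hc : c = flipBit ⟨0, h0N⟩ b
  · rw [if_pos hc, hc, DfunL2 hN b, DfunL1 hN b]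
    simp only [show (1 + 1) / 2 - 1 = 0 by norm_num, show (2 + 1) / 2 - 1 = 0 by norm_num, Dfun_zero]
    have hs := bitSign_sq (b ⟨0, h0N⟩)
    set s := bitSign (b ⟨0, h0N⟩) with hsdef
    set E := ∏ i : Fin N, if 0 < (i : ℕ) then bitSign (b i) else 1 with hEdef
    linear_combination -E * hs
  · rw [if_neg hc]
    ring

lemma lastY {N : ℕ} (hN : 2 ≤ N) (b c : QBasis N) :
    (Matrix.diagonal (Dfun N (N - 1)) * siteY N N) (ush b) (ush c)
      = (-(siteZ N 1 * majorana N 2 * totalParity N)) b c := by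
  have h0N : 0 < N := by omega
  rw [Matrix.neg_apply, totalParity_diag, Matrix.mul_diagonal,
    majorana_even' N 2 rfl (by omega), Matrix.diagonal_mul,
    siteZ_eq N 1 le_rfl (by omega), Matrix.diagonal_mul, Matrix.diagonal_mul,
    siteY_apply N N (by omega) le_rfl, siteY_apply N 1 le_rfl (by omega)]
  have hrho : finRotate N ⟨N - 1, by omega⟩ = ⟨0, h0N⟩ :=
    rho_mk hN (N - 1) 0 (by omega) h0N
      (by rw [show N - 1 + 1 = N from by omega]; exact Nat.mod_self N)
  have hub : ush b ⟨N - 1, by omega⟩ = b ⟨0, h0N⟩ := by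
    unfold ush; rw [hrho]
  rw [flip_ush, hrho]
  simp only [ush_inj.eq_iff]
  rw [hub]
  by_cases hc : c = flipBit ⟨0, h0N⟩ b
  · rw [if_pos hc, hc, DfunL2 hN b, DfunL1 hN b]
    simp only [show (1 + 1) / 2 - 1 = 0 by norm_num, show (2 + 1) / 2 - 1 = 0 by norm_num, Dfun_zero]
    have hs := bitSign_sq (b ⟨0, h0N⟩)
    set s := bitSign (b ⟨0, h0N⟩) with hsdef
    set E := ∏ i : Fin N, if 0 < (i : ℕ) then bitSign (b i) else 1 with hEdef
    linear_combination Complex.I * s * E * hs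
  · rw [if_neg hc]
    ring

/-- let `S` be the (unitary) operator on `N` qubits determined by
`S (v_1 ⊗ v_2 ⊗ ⋯ ⊗ v_N) = v_N ⊗ v_1 ⊗ ⋯ ⊗ v_{N-1}`, i.e. sending each basis
vector `|b⟩` to `|cycShift b⟩`.  Then `S γ_k S† = Z_1 γ_{k+2}` for `1 ≤ k ≤ 2N−2`,
while `S γ_{2N−1} S† = −Z_1 γ_1 P` and `S γ_{2N} S† = −Z_1 γ_2 P`. -/
theorem cyclic_shift_conjugation (N : ℕ) (hN : 2 ≤ N) (S : QOp N)
    (hS : ∀ b : QBasis N, S *ᵥ Pi.single b 1 = Pi.single (cycShift b) 1) :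
    (∀ k : ℕ, 1 ≤ k → k ≤ 2 * N - 2 →
      S * majorana N k * Sᴴ = siteZ N 1 * majorana N (k + 2)) ∧
    S * majorana N (2 * N - 1) * Sᴴ = -(siteZ N 1 * majorana N 1 * totalParity N) ∧
    S * majorana N (2 * N) * Sᴴ = -(siteZ N 1 * majorana N 2 * totalParity N) := by
  have hSe : ∀ b c : QBasis N, S b c = if b = cycShift c then 1 else 0 := by
    intro b c
    have := congrFun (hS c) b
    simpa [Matrix.mulVec_single, Pi.single_apply] using this
  refine ⟨?_, ?_, ?_⟩
  · intro k hk1 hk2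
    have hj1 : 1 ≤ (k + 1) / 2 := by omega
    have hj2 : (k + 1) / 2 ≤ N - 1 := by omega
    have e1 : (k + 2 + 1) / 2 = (k + 1) / 2 + 1 := by omega
    rcases Nat.mod_two_eq_zero_or_one k with hpar | hpar
    · rw [majorana_even' N k hpar (by omega),
        majorana_even' N (k + 2) (by omega : (k + 2) % 2 = 0) (by omega), e1]
      ext b c
      rw [conj_apply S hSe]
      exact midY hN _ hj1 hj2 b c
    · rw [majorana_odd' N k hpar (by omega),
        majorana_odd' N (k + 2) (by omega : (k + 2) % 2 = 1) (by omega), e1]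
      ext b c
      rw [conj_apply S hSe]
      exact midX hN _ hj1 hj2 b c
  · have h2 : (2 * N - 1 + 1) / 2 = N := by omega
    rw [majorana_odd' N (2 * N - 1) (by omega) (by omega), h2]
    ext b c
    rw [conj_apply S hSe]
    exact lastX hN b c
  · have h2 : (2 * N + 1) / 2 = N := by omega
    rw [majorana_even' N (2 * N) (by omega) (by omega), h2]
    ext b c
    rw [conj_apply S hSe]
    exact lastY hN b c

end
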